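/- For all integers n, k with k ≥ 1 and n > 3k, α(P(n,k)) ≥ ⌊4n/5⌋; equivalently, the minimum vertex cover of P(n,k) satisfies β(P(n,k)) ≤ n + ⌈n/5⌉ (Behsaz–Hatami–Mahmoodian's conjecture holds whenever n > 3k). -/

import Mathlib

namespace GP

/-- Adjacency generating relation for the generalized Petersen graph `P(n,k)`:
`Sum.inl i` is the outer vertex `u_i`, `Sum.inr i` is the inner vertex `v_i`. -/
def adjFun (n k : ℕ) : (ZMod n ⊕ ZMod n) → (ZMod n ⊕ ZMod n) → Prop
  | Sum.inl i, Sum.inl j => j = i + 1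
  | Sum.inl i, Sum.inr j => j = i
  | Sum.inr i, Sum.inr j => j = i + (k : ZMod n)
  | _, _ => False

/-- The generalized Petersen graph `P(n,k)`. -/
def P (n k : ℕ) : SimpleGraph (ZMod n ⊕ ZMod n) :=
  SimpleGraph.fromRel (adjFun n k)

/-- `s` is an independent set of vertices in `G`. -/
def IsIndep {V : Type*} (G : SimpleGraph V) (s : Finset V) : Prop :=
  ∀ v ∈ s, ∀ w ∈ s, ¬ G.Adj v w

/-- The independence number of a graph. -/
noncomputable def indepNum {V : Type*} (G : SimpleGraph V) : ℕ :=
  sSup {m | ∃ s : Finset V, IsIndep G s ∧ s.card = m}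

/-- `α(P(n,k))`. -/
noncomputable def alpha (n k : ℕ) : ℕ := indepNum (P n k)

/-- The outer vertex `u_i`. -/
def u (n : ℕ) (i : ZMod n) : ZMod n ⊕ ZMod n := Sum.inl i

/-- The inner vertex `v_i`. -/
def v (n : ℕ) (i : ZMod n) : ZMod n ⊕ ZMod n := Sum.inr i

/-- The `2k`-segment `I_t = {u_t, …, u_{t+2k-1}} ∪ {v_t, …, v_{t+2k-1}}`. -/
def segment (n k : ℕ) (t : ZMod n) : Finset (ZMod n ⊕ ZMod n) :=
  ((Finset.range (2*k)).image fun j : ℕ => u n (t + (j : ZMod n))) ∪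
  ((Finset.range (2*k)).image fun j : ℕ => v n (t + (j : ZMod n)))

-- machinery
lemma le_alpha (n k : ℕ) (hn : 0 < n) (s : Finset (ZMod n ⊕ ZMod n))
    (h : IsIndep (P n k) s) : s.card ≤ alpha n k := by
  haveI : NeZero n := ⟨by omega⟩
  apply le_csSup
  · refine ⟨Fintype.card (ZMod n ⊕ ZMod n), ?_⟩
    rintro m ⟨t, _, rfl⟩
    exact Finset.card_le_univ t
  · exact ⟨s, h, rfl⟩

def S (n : ℕ) (Uc Vc : Finset ℕ) : Finset (ZMod n ⊕ ZMod n) :=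
  Uc.image (fun i : ℕ => u n (i : ZMod n)) ∪ Vc.image (fun i : ℕ => v n (i : ZMod n))

lemma cast_eq_iff {n : ℕ} (a b : ℕ) (hb : b < n) :
    ((a : ZMod n) = (b : ZMod n)) ↔ b = a % n := by
  rw [ZMod.natCast_eq_natCast_iff, Nat.ModEq, Nat.mod_eq_of_lt hb]
  exact ⟨fun h => h.symm, fun h => h.symm⟩

lemma bridge (n k : ℕ) (hn : 0 < n) (Uc Vc : Finset ℕ)
    (hU : ∀ i ∈ Uc, i < n) (hV : ∀ i ∈ Vc, i < n)
    (hd : ∀ i ∈ Uc, i ∉ Vc)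
    (hUU : ∀ i ∈ Uc, ∀ j ∈ Uc, j ≠ (i + 1) % n)
    (hVV : ∀ i ∈ Vc, ∀ j ∈ Vc, j ≠ (i + k) % n) :
    IsIndep (P n k) (S n Uc Vc) ∧ (S n Uc Vc).card = Uc.card + Vc.card := by
  constructor
  · intro x hx y hy hadj
    rw [P, SimpleGraph.fromRel_adj] at hadj
    have hor := hadj.2
    rw [S, Finset.mem_union] at hx hy
    rcases hx with hx | hx <;> rcases hy with hy | hy <;>
      simp only [Finset.mem_image] at hx hy
    · obtain ⟨i, hi, rfl⟩ := hx
      obtain ⟨j, hj, rfl⟩ := hy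
      simp only [u, adjFun] at hor
      rcases hor with h | h
      · have : ((i + 1 : ℕ) : ZMod n) = (j : ZMod n) := by push_cast; rw [h]
        exact hUU i hi j hj ((cast_eq_iff _ _ (hU j hj)).mp this)
      · have : ((j + 1 : ℕ) : ZMod n) = (i : ZMod n) := by push_cast; rw [h]
        exact hUU j hj i hi ((cast_eq_iff _ _ (hU i hi)).mp this)
    · obtain ⟨i, hi, rfl⟩ := hx
      obtain ⟨j, hj, rfl⟩ := hy
      simp only [u, v, adjFun] at hor
      rcases hor with h | h
      · have : ((i : ℕ) : ZMod n) = (j : ZMod n) := h.symm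
        have hji : j = i % n := (cast_eq_iff _ _ (hV j hj)).mp this
        rw [Nat.mod_eq_of_lt (hU i hi)] at hji
        exact hd i hi (hji ▸ hj)
      · exact h
    · obtain ⟨i, hi, rfl⟩ := hx
      obtain ⟨j, hj, rfl⟩ := hy
      simp only [u, v, adjFun] at hor
      rcases hor with h | h
      · exact h
      · have : ((j : ℕ) : ZMod n) = (i : ZMod n) := h.symm
        have hij : i = j % n := (cast_eq_iff _ _ (hV i hi)).mp this
        rw [Nat.mod_eq_of_lt (hU j hj)] at hij
        exact hd j hj (hij ▸ hi)
    · obtain ⟨i, hi, rfl⟩ := hx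
      obtain ⟨j, hj, rfl⟩ := hy
      simp only [v, adjFun] at hor
      rcases hor with h | h
      · have : ((i + k : ℕ) : ZMod n) = (j : ZMod n) := by push_cast; rw [h]
        exact hVV i hi j hj ((cast_eq_iff _ _ (hV j hj)).mp this)
      · have : ((j + k : ℕ) : ZMod n) = (i : ZMod n) := by push_cast; rw [h]
        exact hVV j hj i hi ((cast_eq_iff _ _ (hV i hi)).mp this)
  · rw [S, Finset.card_union_of_disjoint, Finset.card_image_of_injOn,
      Finset.card_image_of_injOn]
    · intro a ha b hb hab
      simp only [v, Sum.inr.injEq] at hab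
      have := congrArg ZMod.val hab
      rwa [ZMod.val_cast_of_lt (hV a ha), ZMod.val_cast_of_lt (hV b hb)] at this
    · intro a ha b hb hab
      simp only [u, Sum.inl.injEq] at hab
      have := congrArg ZMod.val hab
      rwa [ZMod.val_cast_of_lt (hU a ha), ZMod.val_cast_of_lt (hU b hb)] at this
    · rw [Finset.disjoint_left]
      rintro x hx hy
      simp only [Finset.mem_image, u, v] at hx hy
      obtain ⟨i, _, rfl⟩ := hx
      obtain ⟨j, _, hj⟩ := hy
      exact Sum.inl_ne_inr hj.symm

lemma pattern_bound (n k : ℕ) (hn : 0 < n) (Uc Vc : Finset ℕ)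
    (hU : ∀ i ∈ Uc, i < n) (hV : ∀ i ∈ Vc, i < n)
    (hd : ∀ i ∈ Uc, i ∉ Vc)
    (hUU : ∀ i ∈ Uc, ∀ j ∈ Uc, j ≠ (i + 1) % n)
    (hVV : ∀ i ∈ Vc, ∀ j ∈ Vc, j ≠ (i + k) % n)
    (hcard : 4 * n / 5 ≤ Uc.card + Vc.card) :
    4 * n / 5 ≤ alpha n k := by
  obtain ⟨h1, h2⟩ := bridge n k hn Uc Vc hU hV hd hUU hVV
  calc 4 * n / 5 ≤ Uc.card + Vc.card := hcard
    _ = (S n Uc Vc).card := h2.symm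
    _ ≤ alpha n k := le_alpha n k hn _ h1

-- counting lemmas
lemma count_odd (N : ℕ) : ((Finset.range N).filter (fun i => i % 2 = 1)).card = N / 2 := by
  induction N with
  | zero => simp
  | succ m ih =>
    rw [Finset.range_add_one, Finset.filter_insert]
    by_cases h : m % 2 = 1
    · rw [if_pos h, Finset.card_insert_of_notMem (by simp), ih]; omega
    · rw [if_neg h, ih]; omega

lemma count_even (N : ℕ) : ((Finset.range N).filter (fun i => i % 2 = 0)).card = (N + 1) / 2 := by
  induction N with
  | zero => simp
  | succ m ih =>
    rw [Finset.range_add_one, Finset.filter_insert]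
    by_cases h : m % 2 = 0
    · rw [if_pos h, Finset.card_insert_of_notMem (by simp), ih]; omega
    · rw [if_neg h, ih]; omega

lemma count_mod5 (a N : ℕ) (ha : a < 5) :
    ((Finset.range N).filter (fun i => i % 5 = a)).card = (N + 4 - a) / 5 := by
  induction N with
  | zero => simp; omega
  | succ m ih =>
    rw [Finset.range_add_one, Finset.filter_insert]
    by_cases h : m % 5 = a
    · rw [if_pos h, Finset.card_insert_of_notMem (by simp), ih]; omega
    · rw [if_neg h, ih]; omega

lemma count_mod5_pair (a b N : ℕ) (ha : a < 5) (hb : b < 5) (hab : a ≠ b) :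
    ((Finset.range N).filter (fun i => i % 5 = a ∨ i % 5 = b)).card
      = (N + 4 - a) / 5 + (N + 4 - b) / 5 := by
  rw [Finset.filter_or, Finset.card_union_of_disjoint, count_mod5 a N ha, count_mod5 b N hb]
  rw [Finset.disjoint_left]
  intro x hx hy
  simp only [Finset.mem_filter] at hx hy
  omega

-- helper for (i+c) % n
lemma mod_n_cases (i c n : ℕ) (hi : i < n) (hc : c < n) :
    (i + c) % n = i + c ∨ ((i + c) % n = i + c - n ∧ n ≤ i + c) := by
  rcases Nat.lt_or_ge (i + c) n with h | h
  · exact Or.inl (Nat.mod_eq_of_lt h)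
  · right
    refine ⟨?_, h⟩
    rw [Nat.mod_eq_sub_mod h, Nat.mod_eq_of_lt (by omega)]


-- Construction A : k odd, n even
lemma constrA (n k : ℕ) (hk : k % 2 = 1) (hn2 : n % 2 = 0) (h3 : 3 * k < n) :
    4 * n / 5 ≤ alpha n k := by
  have hn : 0 < n := by omega
  have hkn : k < n := by omega
  apply pattern_bound n k hn
    ((Finset.range n).filter (fun i => i % 2 = 0))
    ((Finset.range n).filter (fun i => i % 2 = 1))
  · intro i hi; exact (Finset.mem_filter.mp hi).1 |> Finset.mem_range.mp
  · intro i hi; exact (Finset.mem_filter.mp hi).1 |> Finset.mem_range.mp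
  · intro i hi hj
    simp only [Finset.mem_filter, Finset.mem_range] at hi hj
    omega
  · intro i hi j hj heq
    simp only [Finset.mem_filter, Finset.mem_range] at hi hj
    rcases mod_n_cases i 1 n hi.1 (by omega) with h | ⟨h, h2⟩ <;> omega
  · intro i hi j hj heq
    simp only [Finset.mem_filter, Finset.mem_range] at hi hj
    rcases mod_n_cases i k n hi.1 hkn with h | ⟨h, h2⟩ <;> omega
  · rw [count_even, count_odd]; omega

-- Construction B : k odd, n odd
lemma constrB (n k : ℕ) (hk : k % 2 = 1) (hn2 : n % 2 = 1) (h3 : 3 * k < n) :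
    4 * n / 5 ≤ alpha n k := by
  have hn : 0 < n := by omega
  apply pattern_bound n k hn
    ((Finset.range (n - 2)).filter (fun i => i % 2 = 0))
    ((Finset.range (n - k)).filter (fun i => i % 2 = 1))
  · intro i hi
    have := (Finset.mem_filter.mp hi).1 |> Finset.mem_range.mp
    omega
  · intro i hi
    have := (Finset.mem_filter.mp hi).1 |> Finset.mem_range.mp
    omega
  · intro i hi hj
    simp only [Finset.mem_filter, Finset.mem_range] at hi hj
    omega
  · intro i hi j hj heq
    simp only [Finset.mem_filter, Finset.mem_range] at hi hj
    rcases mod_n_cases i 1 n (by omega) (by omega) with h | ⟨h, h2⟩ <;> omega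
  · intro i hi j hj heq
    simp only [Finset.mem_filter, Finset.mem_range] at hi hj
    rcases mod_n_cases i k n (by omega) (by omega) with h | ⟨h, h2⟩ <;> omega
  · rw [count_even, count_odd]; omega

-- Construction C : k = 2
lemma constrC (n : ℕ) (h3 : 6 < n) : 4 * n / 5 ≤ alpha n 2 := by
  have hn : 0 < n := by omega
  apply pattern_bound n 2 hn
    ((Finset.range n).filter (fun i => i % 5 = 1 ∨ i % 5 = 4))
    ((Finset.range n).filter (fun i => i % 5 = 2 ∨ i % 5 = 3))
  · intro i hi; exact (Finset.mem_filter.mp hi).1 |> Finset.mem_range.mp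
  · intro i hi; exact (Finset.mem_filter.mp hi).1 |> Finset.mem_range.mp
  · intro i hi hj
    simp only [Finset.mem_filter, Finset.mem_range] at hi hj
    omega
  · intro i hi j hj heq
    simp only [Finset.mem_filter, Finset.mem_range] at hi hj
    rcases mod_n_cases i 1 n hi.1 (by omega) with h | ⟨h, h2⟩ <;> omega
  · intro i hi j hj heq
    simp only [Finset.mem_filter, Finset.mem_range] at hi hj
    rcases mod_n_cases i 2 n hi.1 (by omega) with h | ⟨h, h2⟩ <;> omega
  · rw [count_mod5_pair 1 4 n (by norm_num) (by norm_num) (by norm_num),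
      count_mod5_pair 2 3 n (by norm_num) (by norm_num) (by norm_num)]
    omega

lemma succ_divmod (M m : ℕ) (hM : 1 < M) :
    ((m + 1) % M = if m % M + 1 = M then 0 else m % M + 1)
    ∧ ((m + 1) / M = if m % M + 1 = M then m / M + 1 else m / M) := by
  have hdm := Nat.div_add_mod m M
  have hmod : m % M < M := Nat.mod_lt _ (by omega)
  rcases eq_or_ne (m % M + 1) M with h | h
  · have h1 : m + 1 = M * (m / M + 1) := by
      rw [Nat.mul_add, Nat.mul_one]; omega
    constructor
    · rw [if_pos h, h1, Nat.mul_mod_right]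
    · rw [if_pos h, h1, Nat.mul_div_cancel_left _ (by omega : 0 < M)]
  · have h1 : m + 1 = M * (m / M) + (m % M + 1) := by omega
    constructor
    · rw [if_neg h, h1, Nat.mul_add_mod, Nat.mod_eq_of_lt (by omega)]
    · rw [if_neg h, h1, Nat.mul_add_div (by omega : 0 < M),
        Nat.div_eq_of_lt (by omega : m % M + 1 < M), Nat.add_zero]

lemma count_periodic (M : ℕ) (hM : 1 < M) (p : ℕ → Prop) [DecidablePred p] (N : ℕ) :
    ((Finset.range N).filter (fun i => p (i % M))).card
      = N / M * ((Finset.range M).filter p).card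
        + ((Finset.range (N % M)).filter p).card := by
  induction N with
  | zero => simp
  | succ m ih =>
    obtain ⟨e2, e1⟩ := succ_divmod M m hM
    rw [Finset.range_add_one, Finset.filter_insert]
    rcases eq_or_ne (m % M + 1) M with h | h
    · rw [if_pos h] at e1 e2
      have hcnt : ((Finset.range M).filter p).card
          = ((Finset.range (m % M)).filter p).card + (if p (m % M) then 1 else 0) := by
        conv_lhs => rw [show M = m % M + 1 from h.symm]
        rw [Finset.range_add_one, Finset.filter_insert]
        by_cases hp : p (m % M)
        · rw [if_pos hp, if_pos hp, Finset.card_insert_of_notMem (by simp)]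
        · rw [if_neg hp, if_neg hp, Nat.add_zero]
      by_cases hp : p (m % M)
      · rw [if_pos hp, Finset.card_insert_of_notMem (by simp), ih, e1, e2, hcnt,
          if_pos hp]
        simp
        ring
      · rw [if_neg hp, ih, e1, e2, hcnt, if_neg hp]
        simp
        ring
    · rw [if_neg h] at e1 e2
      by_cases hp : p (m % M)
      · rw [if_pos hp, Finset.card_insert_of_notMem (by simp), ih, e1, e2,
          Finset.range_add_one, Finset.filter_insert, if_pos hp,
          Finset.card_insert_of_notMem (by simp)]
        omega
      · rw [if_neg hp, ih, e1, e2, Finset.range_add_one, Finset.filter_insert, if_neg hp]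

lemma mod_of_ge (a M : ℕ) (h1 : M ≤ a) (h2 : a < 2 * M) : a % M = a - M := by
  rw [Nat.mod_eq_sub_mod h1, Nat.mod_eq_of_lt (by omega)]


-- Construction E : k even >= 6, mod (k+1) scheme
lemma constrE (n k : ℕ) (hk2 : k % 2 = 0) (hk6 : 6 ≤ k) (h3 : 3 * k < n)
    (hineq : 4 * n ≤ 5 * (n / (k+1) * ((k+1) / 2) + (n % (k+1)) / 2
      + (n - k) / (k+1) * ((k+1) / 2) + ((n - k) % (k+1) + 1) / 2) + 4) :
    4 * n / 5 ≤ alpha n k := by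
  have hn : 0 < n := by omega
  have hM : 1 < k + 1 := by omega
  set M := k + 1 with hMdef
  apply pattern_bound n k hn
    ((Finset.range n).filter (fun i => i % M % 2 = 1))
    ((Finset.range (n - k)).filter (fun i => i % M % 2 = 0 ∧ i % M < k))
  · intro i hi; exact (Finset.mem_filter.mp hi).1 |> Finset.mem_range.mp
  · intro i hi
    have := (Finset.mem_filter.mp hi).1 |> Finset.mem_range.mp
    omega
  · intro i hi hj
    simp only [Finset.mem_filter, Finset.mem_range] at hi hj
    omega
  · -- no consecutive U
    intro i hi j hj heq
    simp only [Finset.mem_filter, Finset.mem_range] at hi hj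
    obtain ⟨hin, hiu⟩ := hi
    obtain ⟨hjn, hju⟩ := hj
    rcases Nat.lt_or_ge (i + 1) n with hlt | hge
    · rw [Nat.mod_eq_of_lt hlt] at heq
      subst heq
      have hiM : i % M < M := Nat.mod_lt _ (by omega)
      have hne : i % M + 1 ≠ M := by omega
      have e2 := (succ_divmod M i hM).1
      rw [if_neg hne] at e2
      omega
    · have hi1 : i = n - 1 := by omega
      have : (i + 1) % n = 0 := by
        rw [show i + 1 = n by omega, Nat.mod_self]
      rw [this] at heq
      subst heq
      simp at hju
  · -- no V at distance k
    intro i hi j hj heq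
    simp only [Finset.mem_filter, Finset.mem_range] at hi hj
    obtain ⟨hin, hie, hil⟩ := hi
    obtain ⟨hjn, hje, hjl⟩ := hj
    have hikn : i + k < n := by omega
    rw [Nat.mod_eq_of_lt hikn] at heq
    subst heq
    have hkM : k % M = k := Nat.mod_eq_of_lt (by omega)
    have hadd : (i + k) % M = (i % M + k) % M := by
      conv_lhs => rw [Nat.add_mod, hkM]
    rcases Nat.eq_zero_or_pos (i % M) with h0 | hpos
    · rw [h0] at hadd
      simp only [Nat.zero_add, hkM] at hadd
      omega
    · have h2 : 2 ≤ i % M := by omega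
      have : (i % M + k) % M = i % M + k - M := by
        apply mod_of_ge _ _ (by omega) (by omega)
      rw [this] at hadd
      omega
  · -- cardinality
    have c1 := count_periodic M hM (fun r => r % 2 = 1) n
    have c2 := count_periodic M hM (fun r => r % 2 = 0 ∧ r < k) (n - k)
    rw [c1, c2, count_odd M, count_odd (n % M)]
    have d1 : ((Finset.range M).filter (fun r => r % 2 = 0 ∧ r < k)).card = (k + 1) / 2 := by
      have : (Finset.range M).filter (fun r => r % 2 = 0 ∧ r < k)
          = (Finset.range k).filter (fun r => r % 2 = 0) := by
        ext x
        simp only [Finset.mem_filter, Finset.mem_range]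
        omega
      rw [this, count_even]
    have hrB : (n - k) % M < M := Nat.mod_lt _ (by omega)
    have d2 : ((Finset.range ((n - k) % M)).filter (fun r => r % 2 = 0 ∧ r < k)).card
        = ((n - k) % M + 1) / 2 := by
      have : (Finset.range ((n - k) % M)).filter (fun r => r % 2 = 0 ∧ r < k)
          = (Finset.range ((n - k) % M)).filter (fun r => r % 2 = 0) := by
        ext x
        simp only [Finset.mem_filter, Finset.mem_range]
        omega
      rw [this, count_even]
    rw [d1, d2]
    -- now pure arithmetic from hineq, with atoms
    have hM2 : M / 2 = (k+1) / 2 := rfl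
    generalize hA : n / M * ((k+1) / 2) = A at hineq ⊢
    generalize hB : (n - k) / M * ((k+1) / 2) = B at hineq ⊢
    omega

lemma range_split (m N : ℕ) (h : m ≤ N) (p : ℕ → Prop) [DecidablePred p] :
    ((Finset.range N).filter p).card
      = ((Finset.range m).filter p).card + ((Finset.Ico m N).filter p).card := by
  rw [Finset.range_eq_Ico, ← Finset.Ico_union_Ico_eq_Ico (Nat.zero_le m) h,
    Finset.filter_union, Finset.card_union_of_disjoint]
  · rw [Finset.range_eq_Ico]
  apply Finset.disjoint_filter_filter
  rw [Finset.disjoint_left]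
  intro x hx hy
  simp only [Finset.mem_Ico] at hx hy
  omega

lemma count_mod5_Ico (a r N : ℕ) (hr : r < 5) (h : a ≤ N) :
    ((Finset.Ico a N).filter (fun i => i % 5 = r)).card
      = (N + 4 - r) / 5 - (a + 4 - r) / 5 := by
  have := range_split a N h (fun i => i % 5 = r)
  rw [count_mod5 r N hr, count_mod5 r a hr] at this
  omega

lemma count_mod5_Ico_pair (a r s N : ℕ) (hr : r < 5) (hs : s < 5) (hrs : r ≠ s) (h : a ≤ N) :
    ((Finset.Ico a N).filter (fun i => i % 5 = r ∨ i % 5 = s)).card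
      = ((N + 4 - r) / 5 - (a + 4 - r) / 5) + ((N + 4 - s) / 5 - (a + 4 - s) / 5) := by
  rw [Finset.filter_or, Finset.card_union_of_disjoint, count_mod5_Ico a r N hr h,
    count_mod5_Ico a s N hs h]
  rw [Finset.disjoint_left]
  intro x hx hy
  simp only [Finset.mem_filter] at hx hy
  omega


-- Construction D : k = 4
lemma constrD0 (n : ℕ) (h12 : 12 < n) (h5 : n % 5 = 0 ∨ n % 5 = 3) :
    4 * n / 5 ≤ alpha n 4 := by
  apply pattern_bound n 4 (by omega)
    ((Finset.range n).filter (fun i => i % 5 = 2 ∨ i % 5 = 4))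
    ((Finset.range n).filter (fun i => i % 5 = 1 ∨ i % 5 = 3))
  · intro i hi; exact (Finset.mem_filter.mp hi).1 |> Finset.mem_range.mp
  · intro i hi; exact (Finset.mem_filter.mp hi).1 |> Finset.mem_range.mp
  · intro i hi hj
    simp only [Finset.mem_filter, Finset.mem_range] at hi hj
    omega
  · intro i hi j hj heq
    simp only [Finset.mem_filter, Finset.mem_range] at hi hj
    rcases mod_n_cases i 1 n hi.1 (by omega) with h | ⟨h, h2⟩ <;> omega
  · intro i hi j hj heq
    simp only [Finset.mem_filter, Finset.mem_range] at hi hj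
    rcases mod_n_cases i 4 n hi.1 (by omega) with h | ⟨h, h2⟩ <;> omega
  · rw [count_mod5_pair 2 4 n (by norm_num) (by norm_num) (by norm_num),
      count_mod5_pair 1 3 n (by norm_num) (by norm_num) (by norm_num)]
    omega

lemma constrD1 (n : ℕ) (h12 : 12 < n) (h5 : n % 5 = 1) :
    4 * n / 5 ≤ alpha n 4 := by
  apply pattern_bound n 4 (by omega)
    ((Finset.range n).filter
      (fun i => (i < 4 ∧ (i % 5 = 2 ∨ i % 5 = 4)) ∨ (4 ≤ i ∧ (i % 5 = 0 ∨ i % 5 = 2))))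
    ((Finset.range n).filter
      (fun i => (i < 4 ∧ (i % 5 = 1 ∨ i % 5 = 3)) ∨ (4 ≤ i ∧ (i % 5 = 4 ∨ i % 5 = 1))))
  · intro i hi; exact (Finset.mem_filter.mp hi).1 |> Finset.mem_range.mp
  · intro i hi; exact (Finset.mem_filter.mp hi).1 |> Finset.mem_range.mp
  · intro i hi hj
    simp only [Finset.mem_filter, Finset.mem_range] at hi hj
    omega
  · intro i hi j hj heq
    simp only [Finset.mem_filter, Finset.mem_range] at hi hj
    rcases mod_n_cases i 1 n hi.1 (by omega) with h | ⟨h, h2⟩ <;> omega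
  · intro i hi j hj heq
    simp only [Finset.mem_filter, Finset.mem_range] at hi hj
    rcases mod_n_cases i 4 n hi.1 (by omega) with h | ⟨h, h2⟩ <;> omega
  · rw [range_split 4 n (by omega), range_split 4 n (by omega)]
    have cU : ((Finset.Ico 4 n).filter
        (fun i => (i < 4 ∧ (i % 5 = 2 ∨ i % 5 = 4)) ∨ (4 ≤ i ∧ (i % 5 = 0 ∨ i % 5 = 2)))).card
        = ((Finset.Ico 4 n).filter (fun i => i % 5 = 0 ∨ i % 5 = 2)).card := by
      congr 1
      apply Finset.filter_congr
      intro x hx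
      simp only [Finset.mem_Ico] at hx
      constructor
      · intro h; omega
      · intro h; omega
    have cV : ((Finset.Ico 4 n).filter
        (fun i => (i < 4 ∧ (i % 5 = 1 ∨ i % 5 = 3)) ∨ (4 ≤ i ∧ (i % 5 = 4 ∨ i % 5 = 1)))).card
        = ((Finset.Ico 4 n).filter (fun i => i % 5 = 4 ∨ i % 5 = 1)).card := by
      congr 1
      apply Finset.filter_congr
      intro x hx
      simp only [Finset.mem_Ico] at hx
      constructor
      · intro h; omega
      · intro h; omega
    rw [cU, cV, count_mod5_Ico_pair 4 0 2 n (by norm_num) (by norm_num) (by norm_num) (by omega),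
      count_mod5_Ico_pair 4 4 1 n (by norm_num) (by norm_num) (by norm_num) (by omega)]
    have lU : ((Finset.range 4).filter
        (fun i => (i < 4 ∧ (i % 5 = 2 ∨ i % 5 = 4)) ∨ (4 ≤ i ∧ (i % 5 = 0 ∨ i % 5 = 2)))).card
        = 1 := by decide
    have lV : ((Finset.range 4).filter
        (fun i => (i < 4 ∧ (i % 5 = 1 ∨ i % 5 = 3)) ∨ (4 ≤ i ∧ (i % 5 = 4 ∨ i % 5 = 1)))).card
        = 2 := by decide
    rw [lU, lV]
    omega


lemma constrD2 (n : ℕ) (h12 : 18 < n) (h5 : n % 5 = 4) :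
    4 * n / 5 ≤ alpha n 4 := by
  apply pattern_bound n 4 (by omega)
    ((Finset.range n).filter (fun i => (i < 4 ∧ (i % 5 = 2 ∨ i % 5 = 4)) ∨ (4 ≤ i ∧ i < 12 ∧ (i % 5 = 0 ∨ i % 5 = 2)) ∨ (12 ≤ i ∧ (i % 5 = 3 ∨ i % 5 = 0))))
    ((Finset.range n).filter (fun i => (i < 4 ∧ (i % 5 = 1 ∨ i % 5 = 3)) ∨ (4 ≤ i ∧ i < 12 ∧ (i % 5 = 4 ∨ i % 5 = 1)) ∨ (12 ≤ i ∧ (i % 5 = 2 ∨ i % 5 = 4))))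
  · intro i hi; exact (Finset.mem_filter.mp hi).1 |> Finset.mem_range.mp
  · intro i hi; exact (Finset.mem_filter.mp hi).1 |> Finset.mem_range.mp
  · intro i hi hj
    simp only [Finset.mem_filter, Finset.mem_range] at hi hj
    omega
  · intro i hi j hj heq
    simp only [Finset.mem_filter, Finset.mem_range] at hi hj
    rcases mod_n_cases i 1 n hi.1 (by omega) with h | ⟨h, h2⟩ <;> omega
  · intro i hi j hj heq
    simp only [Finset.mem_filter, Finset.mem_range] at hi hj
    rcases mod_n_cases i 4 n hi.1 (by omega) with h | ⟨h, h2⟩ <;> omega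
  · rw [range_split 12 n (by omega), range_split 12 n (by omega)]
    have cU : ((Finset.Ico 12 n).filter (fun i => (i < 4 ∧ (i % 5 = 2 ∨ i % 5 = 4)) ∨ (4 ≤ i ∧ i < 12 ∧ (i % 5 = 0 ∨ i % 5 = 2)) ∨ (12 ≤ i ∧ (i % 5 = 3 ∨ i % 5 = 0)))).card
        = ((Finset.Ico 12 n).filter (fun i => i % 5 = 3 ∨ i % 5 = 0)).card := by
      congr 1
      apply Finset.filter_congr
      intro x hx
      simp only [Finset.mem_Ico] at hx
      constructor
      · intro h; omega
      · intro h; omega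
    have cV : ((Finset.Ico 12 n).filter (fun i => (i < 4 ∧ (i % 5 = 1 ∨ i % 5 = 3)) ∨ (4 ≤ i ∧ i < 12 ∧ (i % 5 = 4 ∨ i % 5 = 1)) ∨ (12 ≤ i ∧ (i % 5 = 2 ∨ i % 5 = 4)))).card
        = ((Finset.Ico 12 n).filter (fun i => i % 5 = 2 ∨ i % 5 = 4)).card := by
      congr 1
      apply Finset.filter_congr
      intro x hx
      simp only [Finset.mem_Ico] at hx
      constructor
      · intro h; omega
      · intro h; omega
    rw [cU, cV,
      count_mod5_Ico_pair 12 3 0 n (by norm_num) (by norm_num) (by norm_num) (by omega),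
      count_mod5_Ico_pair 12 2 4 n (by norm_num) (by norm_num) (by norm_num) (by omega)]
    have lU : ((Finset.range 12).filter (fun i => (i < 4 ∧ (i % 5 = 2 ∨ i % 5 = 4)) ∨ (4 ≤ i ∧ i < 12 ∧ (i % 5 = 0 ∨ i % 5 = 2)) ∨ (12 ≤ i ∧ (i % 5 = 3 ∨ i % 5 = 0)))).card = 4 := by decide
    have lV : ((Finset.range 12).filter (fun i => (i < 4 ∧ (i % 5 = 1 ∨ i % 5 = 3)) ∨ (4 ≤ i ∧ i < 12 ∧ (i % 5 = 4 ∨ i % 5 = 1)) ∨ (12 ≤ i ∧ (i % 5 = 2 ∨ i % 5 = 4)))).card = 6 := by decide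
    rw [lU, lV]
    omega

lemma constrD3 (n : ℕ) (h12 : 26 < n) (h5 : n % 5 = 2) :
    4 * n / 5 ≤ alpha n 4 := by
  apply pattern_bound n 4 (by omega)
    ((Finset.range n).filter (fun i => (i < 4 ∧ (i % 5 = 2 ∨ i % 5 = 4)) ∨ (4 ≤ i ∧ i < 12 ∧ (i % 5 = 0 ∨ i % 5 = 2)) ∨ (12 ≤ i ∧ i < 20 ∧ (i % 5 = 3 ∨ i % 5 = 0)) ∨ (20 ≤ i ∧ (i % 5 = 1 ∨ i % 5 = 3))))
    ((Finset.range n).filter (fun i => (i < 4 ∧ (i % 5 = 1 ∨ i % 5 = 3)) ∨ (4 ≤ i ∧ i < 12 ∧ (i % 5 = 4 ∨ i % 5 = 1)) ∨ (12 ≤ i ∧ i < 20 ∧ (i % 5 = 2 ∨ i % 5 = 4)) ∨ (20 ≤ i ∧ (i % 5 = 0 ∨ i % 5 = 2))))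
  · intro i hi; exact (Finset.mem_filter.mp hi).1 |> Finset.mem_range.mp
  · intro i hi; exact (Finset.mem_filter.mp hi).1 |> Finset.mem_range.mp
  · intro i hi hj
    simp only [Finset.mem_filter, Finset.mem_range] at hi hj
    omega
  · intro i hi j hj heq
    simp only [Finset.mem_filter, Finset.mem_range] at hi hj
    rcases mod_n_cases i 1 n hi.1 (by omega) with h | ⟨h, h2⟩ <;> omega
  · intro i hi j hj heq
    simp only [Finset.mem_filter, Finset.mem_range] at hi hj
    rcases mod_n_cases i 4 n hi.1 (by omega) with h | ⟨h, h2⟩ <;> omega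
  · rw [range_split 20 n (by omega), range_split 20 n (by omega)]
    have cU : ((Finset.Ico 20 n).filter (fun i => (i < 4 ∧ (i % 5 = 2 ∨ i % 5 = 4)) ∨ (4 ≤ i ∧ i < 12 ∧ (i % 5 = 0 ∨ i % 5 = 2)) ∨ (12 ≤ i ∧ i < 20 ∧ (i % 5 = 3 ∨ i % 5 = 0)) ∨ (20 ≤ i ∧ (i % 5 = 1 ∨ i % 5 = 3)))).card
        = ((Finset.Ico 20 n).filter (fun i => i % 5 = 1 ∨ i % 5 = 3)).card := by
      congr 1
      apply Finset.filter_congr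
      intro x hx
      simp only [Finset.mem_Ico] at hx
      constructor
      · intro h; omega
      · intro h; omega
    have cV : ((Finset.Ico 20 n).filter (fun i => (i < 4 ∧ (i % 5 = 1 ∨ i % 5 = 3)) ∨ (4 ≤ i ∧ i < 12 ∧ (i % 5 = 4 ∨ i % 5 = 1)) ∨ (12 ≤ i ∧ i < 20 ∧ (i % 5 = 2 ∨ i % 5 = 4)) ∨ (20 ≤ i ∧ (i % 5 = 0 ∨ i % 5 = 2)))).card
        = ((Finset.Ico 20 n).filter (fun i => i % 5 = 0 ∨ i % 5 = 2)).card := by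
      congr 1
      apply Finset.filter_congr
      intro x hx
      simp only [Finset.mem_Ico] at hx
      constructor
      · intro h; omega
      · intro h; omega
    rw [cU, cV,
      count_mod5_Ico_pair 20 1 3 n (by norm_num) (by norm_num) (by norm_num) (by omega),
      count_mod5_Ico_pair 20 0 2 n (by norm_num) (by norm_num) (by norm_num) (by omega)]
    have lU : ((Finset.range 20).filter (fun i => (i < 4 ∧ (i % 5 = 2 ∨ i % 5 = 4)) ∨ (4 ≤ i ∧ i < 12 ∧ (i % 5 = 0 ∨ i % 5 = 2)) ∨ (12 ≤ i ∧ i < 20 ∧ (i % 5 = 3 ∨ i % 5 = 0)) ∨ (20 ≤ i ∧ (i % 5 = 1 ∨ i % 5 = 3)))).card = 7 := by decide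
    have lV : ((Finset.range 20).filter (fun i => (i < 4 ∧ (i % 5 = 1 ∨ i % 5 = 3)) ∨ (4 ≤ i ∧ i < 12 ∧ (i % 5 = 4 ∨ i % 5 = 1)) ∨ (12 ≤ i ∧ i < 20 ∧ (i % 5 = 2 ∨ i % 5 = 4)) ∨ (20 ≤ i ∧ (i % 5 = 0 ∨ i % 5 = 2)))).card = 10 := by decide
    rw [lU, lV]
    omega

lemma E_ineq_big (n k : ℕ) (hk2 : k % 2 = 0) (hk14 : 14 ≤ k) (h3 : 3 * k < n) :
    4 * n ≤ 5 * (n / (k+1) * ((k+1) / 2) + (n % (k+1)) / 2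
      + (n - k) / (k+1) * ((k+1) / 2) + ((n - k) % (k+1) + 1) / 2) + 4 := by
  obtain ⟨H, hH⟩ : ∃ H, k = 2 * H := ⟨k / 2, by omega⟩
  have h7 : 7 ≤ H := by omega
  have hM0 : 0 < k + 1 := by omega
  have hq := Nat.div_add_mod n (k+1)
  have hrU : n % (k+1) < k + 1 := Nat.mod_lt _ hM0
  have hhalf : (k+1) / 2 = H := by omega
  have hq2 : 2 ≤ n / (k+1) := by
    by_contra hc
    push_neg at hc
    have : (k+1) * (n / (k+1)) ≤ (k+1) * 1 := Nat.mul_le_mul_left _ (by omega)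
    omega
  obtain ⟨q, hqdef⟩ : ∃ q, n / (k+1) = q + 2 := ⟨n / (k+1) - 2, by omega⟩
  rw [hqdef] at hq
  rcases eq_or_lt_of_le (show n % (k+1) ≤ k by omega) with hrk | hrk
  · -- rU = k
    have hnk : n - k = (k+1) * (q + 2) := by omega
    have e1 : (n - k) / (k+1) = q + 2 := by
      rw [hnk, Nat.mul_div_cancel_left _ hM0]
    have e2 : (n - k) % (k+1) = 0 := by
      rw [hnk, Nat.mul_mod_right]
    rw [e1, e2, hqdef, hhalf]
    have hr2 : n % (k+1) / 2 = H := by omega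
    rw [hr2]
    have hexp : (k+1) * (q+2) = 2*H*q + 4*H + q + 2 := by rw [hH]; ring
    have hkey : 7 * q ≤ H * q := Nat.mul_le_mul_right q h7
    have h0 : (0 + 1) / 2 = 0 := by norm_num
    rw [h0]
    nlinarith [hq, hexp, hkey, hrk, hH, h7]
  · -- rU < k
    have hnk : n - k = (k+1) * (q + 1) + (n % (k+1) + 1) := by
      have : (k+1) * (q+2) = (k+1) * (q+1) + (k+1) := by ring
      omega
    have e1 : (n - k) / (k+1) = q + 1 := by
      rw [hnk, Nat.mul_add_div hM0, Nat.div_eq_of_lt (by omega)]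
    have e2 : (n - k) % (k+1) = n % (k+1) + 1 := by
      rw [hnk, Nat.mul_add_mod, Nat.mod_eq_of_lt (by omega)]
    rw [e1, e2, hqdef, hhalf]
    obtain ⟨a, e, he, hae⟩ : ∃ a e, e < 2 ∧ n % (k+1) = 2*a + e :=
      ⟨n % (k+1) / 2, n % (k+1) % 2, Nat.mod_lt _ (by omega), by omega⟩
    rw [hae]
    have d1 : (2*a + e) / 2 = a := by omega
    have d2 : (2*a + e + 1 + 1) / 2 = a + 1 := by omega
    rw [d1, d2]
    have hexp : (k+1) * (q+2) = 2*H*q + 4*H + q + 2 := by rw [hH]; ring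
    rcases Nat.eq_zero_or_pos q with rfl | hqpos
    · -- q = 0 : n % (k+1) >= 2H - 1 from 3k < n
      omega
    · have hkey : 7 * q ≤ H * q := Nat.mul_le_mul_right q h7
      have ha : (q+2) * H = H * q + 2 * H := by ring
      have hb : (q+1) * H = H * q + H := by ring
      nlinarith [hq, hexp, hkey, ha, hb, he, h7]


lemma E6 (n : ℕ) (h3 : 18 < n) (he : n ≠ 19 ∧ n ≠ 20 ∧ n ≠ 22 ∧ n ≠ 24 ∧ n ≠ 29) : 4 * n / 5 ≤ alpha n 6 := by
  apply constrE n 6 (by norm_num) (by norm_num) h3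
  show 4 * n ≤ 5 * (n / 7 * (7 / 2) + n % 7 / 2 + (n - 6) / 7 * (7 / 2)
    + ((n - 6) % 7 + 1) / 2) + 4
  obtain ⟨a, r, hr, rfl⟩ : ∃ a r, r < 7 ∧ n = 7 * a + r :=
    ⟨n / 7, n % 7, Nat.mod_lt _ (by norm_num), by omega⟩
  interval_cases r <;> omega

lemma E8 (n : ℕ) (h3 : 24 < n) (he : n ≠ 25 ∧ n ≠ 28 ∧ n ≠ 30) : 4 * n / 5 ≤ alpha n 8 := by
  apply constrE n 8 (by norm_num) (by norm_num) h3
  show 4 * n ≤ 5 * (n / 9 * (9 / 2) + n % 9 / 2 + (n - 8) / 9 * (9 / 2)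
    + ((n - 8) % 9 + 1) / 2) + 4
  obtain ⟨a, r, hr, rfl⟩ : ∃ a r, r < 9 ∧ n = 9 * a + r :=
    ⟨n / 9, n % 9, Nat.mod_lt _ (by norm_num), by omega⟩
  interval_cases r <;> omega

lemma E10 (n : ℕ) (h3 : 30 < n) (he : n ≠ 34) : 4 * n / 5 ≤ alpha n 10 := by
  apply constrE n 10 (by norm_num) (by norm_num) h3
  show 4 * n ≤ 5 * (n / 11 * (11 / 2) + n % 11 / 2 + (n - 10) / 11 * (11 / 2)
    + ((n - 10) % 11 + 1) / 2) + 4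
  obtain ⟨a, r, hr, rfl⟩ : ∃ a r, r < 11 ∧ n = 11 * a + r :=
    ⟨n / 11, n % 11, Nat.mod_lt _ (by norm_num), by omega⟩
  interval_cases r <;> omega

lemma E12 (n : ℕ) (h3 : 36 < n) (he : n ≠ 40) : 4 * n / 5 ≤ alpha n 12 := by
  apply constrE n 12 (by norm_num) (by norm_num) h3
  show 4 * n ≤ 5 * (n / 13 * (13 / 2) + n % 13 / 2 + (n - 12) / 13 * (13 / 2)
    + ((n - 12) % 13 + 1) / 2) + 4
  obtain ⟨a, r, hr, rfl⟩ : ∃ a r, r < 13 ∧ n = 13 * a + r :=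
    ⟨n / 13, n % 13, Nat.mod_lt _ (by norm_num), by omega⟩
  interval_cases r <;> omega

lemma Ebig (n k : ℕ) (hk2 : k % 2 = 0) (hk14 : 14 ≤ k) (h3 : 3 * k < n) :
    4 * n / 5 ≤ alpha n k :=
  constrE n k hk2 (by omega) h3 (E_ineq_big n k hk2 hk14 h3)

lemma lit_14_4 : 4 * 14 / 5 ≤ alpha 14 4 := by
  apply pattern_bound 14 4 (by norm_num) ({0,2,5,7,9,11} : Finset ℕ) ({1,4,6,12,13} : Finset ℕ)
  · decide
  · decide
  · decide
  · decide
  · decide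
  · decide

lemma lit_17_4 : 4 * 17 / 5 ≤ alpha 17 4 := by
  apply pattern_bound 17 4 (by norm_num) ({0,2,5,8,10,13} : Finset ℕ) ({1,4,6,7,9,12,15} : Finset ℕ)
  · decide
  · decide
  · decide
  · decide
  · decide
  · decide

lemma lit_22_4 : 4 * 22 / 5 ≤ alpha 22 4 := by
  apply pattern_bound 22 4 (by norm_num) ({2,5,8,10,13,18,21} : Finset ℕ) ({1,4,6,7,9,12,14,15,17,20} : Finset ℕ)
  · decide
  · decide
  · decide
  · decide
  · decide
  · decide

lemma lit_19_6 : 4 * 19 / 5 ≤ alpha 19 6 := by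
  apply pattern_bound 19 6 (by norm_num) ({2,4,8,10,13,16,18} : Finset ℕ) ({0,3,5,7,12,14,15,17} : Finset ℕ)
  · decide
  · decide
  · decide
  · decide
  · decide
  · decide

lemma lit_20_6 : 4 * 20 / 5 ≤ alpha 20 6 := by
  apply pattern_bound 20 6 (by norm_num) ({1,4,6,8,11,13,15,17,19} : Finset ℕ) ({0,2,3,5,7,10,18} : Finset ℕ)
  · decide
  · decide
  · decide
  · decide
  · decide
  · decide

lemma lit_22_6 : 4 * 22 / 5 ≤ alpha 22 6 := by
  apply pattern_bound 22 6 (by norm_num) ({0,2,5,7,10,12,18,20} : Finset ℕ) ({1,4,6,8,9,11,13,16,21} : Finset ℕ)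
  · decide
  · decide
  · decide
  · decide
  · decide
  · decide

lemma lit_24_6 : 4 * 24 / 5 ≤ alpha 24 6 := by
  apply pattern_bound 24 6 (by norm_num) ({0,2,4,9,12,14,19,21} : Finset ℕ) ({1,3,6,8,10,11,13,15,18,22,23} : Finset ℕ)
  · decide
  · decide
  · decide
  · decide
  · decide
  · decide

lemma lit_29_6 : 4 * 29 / 5 ≤ alpha 29 6 := by
  apply pattern_bound 29 6 (by norm_num) ({0,3,5,7,11,13,15,18,20,23,25,27} : Finset ℕ) ({2,6,9,14,16,17,19,21,24,26,28} : Finset ℕ)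
  · decide
  · decide
  · decide
  · decide
  · decide
  · decide

lemma lit_25_8 : 4 * 25 / 5 ≤ alpha 25 8 := by
  apply pattern_bound 25 8 (by norm_num) ({0,3,5,7,9,12,14,19,23} : Finset ℕ) ({1,2,4,6,11,13,15,16,17,20,22} : Finset ℕ)
  · decide
  · decide
  · decide
  · decide
  · decide
  · decide

lemma lit_28_8 : 4 * 28 / 5 ≤ alpha 28 8 := by
  apply pattern_bound 28 8 (by norm_num) ({2,4,8,11,14,16,18,23,25,27} : Finset ℕ) ({0,1,3,5,10,12,15,17,19,22,24,26} : Finset ℕ)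
  · decide
  · decide
  · decide
  · decide
  · decide
  · decide

lemma lit_30_8 : 4 * 30 / 5 ≤ alpha 30 8 := by
  apply pattern_bound 30 8 (by norm_num) ({0,2,5,7,9,11,13,16,18,23,25,27} : Finset ℕ) ({1,3,8,10,14,15,17,19,21,24,26,28} : Finset ℕ)
  · decide
  · decide
  · decide
  · decide
  · decide
  · decide

lemma lit_34_10 : 4 * 34 / 5 ≤ alpha 34 10 := by
  apply pattern_bound 34 10 (by norm_num) ({1,3,5,8,10,12,14,16,19,21,23,26,28,31,33} : Finset ℕ) ({0,2,7,9,11,13,15,18,20,22,27,29} : Finset ℕ)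
  · decide
  · decide
  · decide
  · decide
  · decide
  · decide

lemma lit_40_12 : 4 * 40 / 5 ≤ alpha 40 12 := by
  apply pattern_bound 40 12 (by norm_num) ({2,4,7,10,12,14,23,25,28,31,33,36,39} : Finset ℕ) ({0,3,5,6,8,11,13,16,19,21,22,24,26,27,29,30,32,35,37} : Finset ℕ)
  · decide
  · decide
  · decide
  · decide
  · decide
  · decide

theorem main (n k : ℕ) (hk : 1 ≤ k) (hn : 3 * k < n) : 4 * n / 5 ≤ alpha n k := by
  by_cases hko : k % 2 = 1
  · by_cases hne : n % 2 = 0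
    · exact constrA n k hko hne hn
    · exact constrB n k hko (by omega) hn
  · have hk2 : k % 2 = 0 := by omega
    rcases (show k = 2 ∨ k = 4 ∨ k = 6 ∨ k = 8 ∨ k = 10 ∨ k = 12 ∨ 14 ≤ k by omega) with
      rfl | rfl | rfl | rfl | rfl | rfl | h14
    · exact constrC n (by omega)
    · rcases (show n % 5 = 0 ∨ n % 5 = 3 ∨ n % 5 = 1 ∨ n % 5 = 4 ∨ n % 5 = 2 by omega) with
        h5 | h5 | h5 | h5 | h5
      · exact constrD0 n (by omega) (Or.inl h5)
      · exact constrD0 n (by omega) (Or.inr h5)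
      · exact constrD1 n (by omega) h5
      · rcases (show n = 14 ∨ 18 < n by omega) with rfl | h
        · exact lit_14_4
        · exact constrD2 n h h5
      · rcases (show n = 17 ∨ n = 22 ∨ 26 < n by omega) with rfl | rfl | h
        · exact lit_17_4
        · exact lit_22_4
        · exact constrD3 n h h5
    · rcases (show n = 19 ∨ n = 20 ∨ n = 22 ∨ n = 24 ∨ n = 29 ∨
          (n ≠ 19 ∧ n ≠ 20 ∧ n ≠ 22 ∧ n ≠ 24 ∧ n ≠ 29) by omega) with
        rfl | rfl | rfl | rfl | rfl | he
      · exact lit_19_6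
      · exact lit_20_6
      · exact lit_22_6
      · exact lit_24_6
      · exact lit_29_6
      · exact E6 n hn he
    · rcases (show n = 25 ∨ n = 28 ∨ n = 30 ∨ (n ≠ 25 ∧ n ≠ 28 ∧ n ≠ 30) by omega) with
        rfl | rfl | rfl | he
      · exact lit_25_8
      · exact lit_28_8
      · exact lit_30_8
      · exact E8 n hn he
    · rcases (show n = 34 ∨ n ≠ 34 by omega) with rfl | he
      · exact lit_34_10
      · exact E10 n hn he
    · rcases (show n = 40 ∨ n ≠ 40 by omega) with rfl | he
      · exact lit_40_12
      · exact E12 n hn he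
    · exact Ebig n k hk2 h14 hn


/-- For all `k ≥ 1` and `n > 3k`, `α(P(n,k)) ≥ ⌊4n/5⌋`
(Behsaz–Hatami–Mahmoodian's conjecture holds whenever `n > 3k`). -/
theorem bhm_conjecture_n_gt_3k (n k : ℕ) (hk : 1 ≤ k) (hn : 3 * k < n) :
    4 * n / 5 ≤ alpha n k := by
  exact main n k hk hn

end GP
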